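/- Let B be an R-bilinear antisymmetric biderivation of D with values in I(P,R). Then: (a) for all x ≤ y < z < u in P, B(e_{xy}, e_{yz})(x,z) = B(e_{xy}, e_{yu})(x,u); (b) for all x < y < z ≤ u in P, B(e_{yz}, e_{zu})(y,u) = B(e_{xz}, e_{zu})(x,u). -/

import Mathlib

/-- The element `e_{xy}` of the incidence algebra: value `1` at `(x, y)` and `0` elsewhere. -/
def esingle (R : Type*) {P : Type*} [CommRing R] [PartialOrder P] [DecidableEq P]
    {x y : P} (_h : x ≤ y) : IncidenceAlgebra R P :=
  ⟨fun u v => if u = x ∧ v = y then 1 else 0, fun u v huv => by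
    split_ifs with h'
    · obtain ⟨rfl, rfl⟩ := h'
      exact absurd _h huv
    · rfl⟩

/-- `D`: the `R`-span of the elements `e_{xy}`, `x ≤ y`, i.e. the finitely supported elements of
the incidence algebra. -/
def Dspan (R P : Type*) [CommRing R] [PartialOrder P] [DecidableEq P] :
    Submodule R (IncidenceAlgebra R P) :=
  Submodule.span R {f : IncidenceAlgebra R P | ∃ (x y : P) (h : x ≤ y), f = esingle R h}

section Aux
variable {R P : Type*} [CommRing R] [PartialOrder P] [LocallyFiniteOrder P] [DecidableEq P]

lemma esingle_apply {x y : P} (h : x ≤ y) (a b : P) :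
    esingle R h a b = if a = x ∧ b = y then 1 else 0 := rfl

lemma esingle_mem {x y : P} (h : x ≤ y) : esingle R h ∈ Dspan R P :=
  Submodule.subset_span ⟨x, y, h, rfl⟩

lemma mul_esingle_apply (f : IncidenceAlgebra R P) {z u : P} (h : z ≤ u) (a b : P) :
    (f * esingle R h) a b = if b = u ∧ z ∈ Finset.Icc a b then f a z else 0 := by
  rw [IncidenceAlgebra.mul_apply]
  have : ∀ t ∈ Finset.Icc a b,
      f a t * esingle R h t b = if t = z then (if b = u then f a z else 0) else 0 := by
    intro t _
    rw [esingle_apply]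
    by_cases h1 : t = z <;> by_cases h2 : b = u <;> simp [h1, h2]
  rw [Finset.sum_congr rfl this, Finset.sum_ite_eq']
  split_ifs <;> simp_all

lemma esingle_mul_apply (f : IncidenceAlgebra R P) {x y : P} (h : x ≤ y) (a b : P) :
    (esingle R h * f) a b = if a = x ∧ y ∈ Finset.Icc a b then f y b else 0 := by
  rw [IncidenceAlgebra.mul_apply]
  have : ∀ t ∈ Finset.Icc a b,
      esingle R h a t * f t b = if t = y then (if a = x then f y b else 0) else 0 := by
    intro t _
    rw [esingle_apply]
    by_cases h1 : t = y <;> by_cases h2 : a = x <;> simp [h1, h2]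
  rw [Finset.sum_congr rfl this, Finset.sum_ite_eq']
  split_ifs <;> simp_all

lemma esingle_mul_esingle {x y z : P} (hxy : x ≤ y) (hyz : y ≤ z) :
    esingle R hxy * esingle R hyz = esingle R (hxy.trans hyz) := by
  ext a b _
  rw [esingle_mul_apply, esingle_apply, esingle_apply]
  by_cases h1 : a = x <;> by_cases h2 : b = z
  · subst h1; subst h2
    simp [Finset.mem_Icc, hxy, hyz]
  all_goals simp [h1, h2]

end Aux

section Main
variable {R P : Type*} [CommRing R] [PartialOrder P] [LocallyFiniteOrder P] [DecidableEq P]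
  (B : IncidenceAlgebra R P → IncidenceAlgebra R P → IncidenceAlgebra R P)

lemma skew_aux
    (hadd_l : ∀ f g h, f ∈ Dspan R P → g ∈ Dspan R P → h ∈ Dspan R P →
      B (f + g) h = B f h + B g h)
    (hadd_r : ∀ f g h, f ∈ Dspan R P → g ∈ Dspan R P → h ∈ Dspan R P →
      B f (g + h) = B f g + B f h)
    (hanti : ∀ f, f ∈ Dspan R P → B f f = 0)
    (f g : IncidenceAlgebra R P) (hf : f ∈ Dspan R P) (hg : g ∈ Dspan R P) :
    B f g = -B g f := by
  have hfg : f + g ∈ Dspan R P := add_mem hf hg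
  have h0 := hanti (f + g) hfg
  rw [hadd_l f g (f + g) hf hg hfg, hadd_r f f g hf hf hg, hadd_r g f g hg hf hg,
    hanti f hf, hanti g hg] at h0
  rw [zero_add, add_zero] at h0
  exact eq_neg_of_add_eq_zero_left h0

lemma idem_eval
    (hder_l : ∀ f g h, f ∈ Dspan R P → g ∈ Dspan R P → h ∈ Dspan R P →
      B (f * g) h = B f h * g + f * B g h)
    (x0 : P) (f : IncidenceAlgebra R P) (hf : f ∈ Dspan R P)
    (z w : P) (hz : z ≠ x0) (hw : w ≠ x0) :
    B (esingle R (le_refl x0)) f z w = 0 := by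
  set e : IncidenceAlgebra R P := esingle R (le_refl x0) with he
  have hee : e * e = e := esingle_mul_esingle (le_refl x0) (le_refl x0)
  have h := hder_l e e f (esingle_mem _) (esingle_mem _) hf
  rw [hee] at h
  have h2 := congrFun (congrFun (congrArg (DFunLike.coe) h) z) w
  rw [IncidenceAlgebra.add_apply] at h2
  rw [mul_esingle_apply, esingle_mul_apply, if_neg (fun hc => hw hc.1),
    if_neg (fun hc => hz hc.1), add_zero] at h2
  exact h2

end Main

/-- For an `R`-bilinear antisymmetric biderivation `B` of `D` with values in
`I(P,R)`: (a) for `x ≤ y < z < u`, `B(e_{xy}, e_{yz})(x,z) = B(e_{xy}, e_{yu})(x,u)`; and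
(b) for `x < y < z ≤ u`, `B(e_{yz}, e_{zu})(y,u) = B(e_{xz}, e_{zu})(x,u)`. -/
theorem bider_esingle_relations'
    {R P : Type*} [CommRing R] [PartialOrder P] [LocallyFiniteOrder P] [DecidableEq P]
    (B : IncidenceAlgebra R P → IncidenceAlgebra R P → IncidenceAlgebra R P)
    (hadd_l : ∀ f g h, f ∈ Dspan R P → g ∈ Dspan R P → h ∈ Dspan R P →
      B (f + g) h = B f h + B g h)
    (hadd_r : ∀ f g h, f ∈ Dspan R P → g ∈ Dspan R P → h ∈ Dspan R P →
      B f (g + h) = B f g + B f h)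
    (hsmul_l : ∀ (r : R) (f h), f ∈ Dspan R P → h ∈ Dspan R P → B (r • f) h = r • B f h)
    (hsmul_r : ∀ (r : R) (f h), f ∈ Dspan R P → h ∈ Dspan R P → B f (r • h) = r • B f h)
    (hder_l : ∀ f g h, f ∈ Dspan R P → g ∈ Dspan R P → h ∈ Dspan R P →
      B (f * g) h = B f h * g + f * B g h)
    (hder_r : ∀ f g h, f ∈ Dspan R P → g ∈ Dspan R P → h ∈ Dspan R P →
      B f (g * h) = B f g * h + g * B f h)
    (hanti : ∀ f, f ∈ Dspan R P → B f f = 0)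
    :
    (∀ (x y z u : P) (hxy : x ≤ y) (hyz : y < z) (hzu : z < u),
      (B (esingle R hxy) (esingle R hyz.le)) x z =
        (B (esingle R hxy) (esingle R (hyz.trans hzu).le)) x u) ∧
    (∀ (x y z u : P) (hxy : x < y) (hyz : y < z) (hzu : z ≤ u),
      (B (esingle R hyz.le) (esingle R hzu)) y u =
        (B (esingle R (hxy.trans hyz).le) (esingle R hzu)) x u) := by
  constructor
  · -- part (a)
    intro x y z u hxy hyz hzu
    have hprod : esingle R hyz.le * esingle R hzu.le = esingle R (hyz.trans hzu).le :=
      esingle_mul_esingle _ _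
    have hd := hder_r (esingle R hxy) (esingle R hyz.le) (esingle R hzu.le)
      (esingle_mem _) (esingle_mem _) (esingle_mem _)
    rw [hprod] at hd
    have h2 : B (esingle R hxy) (esingle R (hyz.trans hzu).le) x u =
        (B (esingle R hxy) (esingle R hyz.le) * esingle R hzu.le) x u +
        (esingle R hyz.le * B (esingle R hxy) (esingle R hzu.le)) x u := by
      rw [hd]; rfl
    have hzIcc : z ∈ Finset.Icc x u :=
      Finset.mem_Icc.2 ⟨hxy.trans hyz.le, hzu.le⟩
    rw [mul_esingle_apply, if_pos ⟨rfl, hzIcc⟩, esingle_mul_apply] at h2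
    rcases hxy.lt_or_eq with hlt | heq
    · rw [if_neg (fun hc => hlt.ne hc.1), add_zero] at h2
      exact h2.symm
    · subst heq
      have : B (esingle R hxy) (esingle R hzu.le) z u = 0 := by
        have hxx : esingle R hxy = esingle R (le_refl x) := rfl
        rw [hxx]
        exact idem_eval B hder_l x _ (esingle_mem _) z u hyz.ne' (hyz.trans hzu).ne'
      rw [this] at h2
      simpa using h2.symm
  · -- part (b)
    intro x y z u hxy hyz hzu
    have hprod : esingle R hxy.le * esingle R hyz.le = esingle R (hxy.trans hyz).le :=
      esingle_mul_esingle _ _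
    have hd := hder_l (esingle R hxy.le) (esingle R hyz.le) (esingle R hzu)
      (esingle_mem _) (esingle_mem _) (esingle_mem _)
    rw [hprod] at hd
    have h2 : B (esingle R (hxy.trans hyz).le) (esingle R hzu) x u =
        (B (esingle R hxy.le) (esingle R hzu) * esingle R hyz.le) x u +
        (esingle R hxy.le * B (esingle R hyz.le) (esingle R hzu)) x u := by
      rw [hd]; rfl
    have hyIcc : y ∈ Finset.Icc x u :=
      Finset.mem_Icc.2 ⟨hxy.le, (hyz.trans_le hzu).le⟩
    rw [esingle_mul_apply, if_pos ⟨rfl, hyIcc⟩, mul_esingle_apply] at h2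
    rcases hzu.lt_or_eq with hlt | heq
    · rw [if_neg (fun hc => hlt.ne' hc.1), zero_add] at h2
      exact h2.symm
    · subst heq
      have : B (esingle R hxy.le) (esingle R hzu) x y = 0 := by
        have hzz : esingle R hzu = esingle R (le_refl z) := rfl
        rw [skew_aux B hadd_l hadd_r hanti _ _ (esingle_mem _) (esingle_mem _),
          IncidenceAlgebra.neg_apply, hzz,
          idem_eval B hder_l z _ (esingle_mem _) x y (hxy.trans hyz).ne hyz.ne, neg_zero]
      rw [this] at h2
      simpa using h2.symm
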